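/- Let G be a subgroup of SL(2,ℂ) whose natural action on ℂ² is reducible. Then G is unitary if and only if there exists an invertible 2×2 complex matrix T such that either (a) for every g ∈ G, T⁻¹ g T has real entries and lies in SO(2,ℝ) (real orthogonal with determinant 1), or (b) for every g ∈ G, T⁻¹ g T is upper-triangular with all real entries (and determinant 1). -/

import Mathlib

open Matrix Complex

/-- A subgroup of `SL(2,ℂ)`, viewed as a set of matrices, is *unitary* if it preserves some
nondegenerate Hermitian form `H` under `g ↦ gᴴ H g`. -/
def IsUnitarySubgroup (G : Subgroup (Matrix.SpecialLinearGroup (Fin 2) ℂ)) : Prop :=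
  ∃ H : Matrix (Fin 2) (Fin 2) ℂ, H.IsHermitian ∧ H.det ≠ 0 ∧
    ∀ g ∈ G, (g : Matrix (Fin 2) (Fin 2) ℂ)ᴴ * H * (g : Matrix (Fin 2) (Fin 2) ℂ) = H

/-- The natural action of `G ⊆ SL(2,ℂ)` on `ℂ²` is reducible if there is a nonzero common
eigenvector. -/
def IsReducibleSubgroup (G : Subgroup (Matrix.SpecialLinearGroup (Fin 2) ℂ)) : Prop :=
  ∃ v : Fin 2 → ℂ, v ≠ 0 ∧ ∀ g ∈ G, ∃ c : ℂ, (g : Matrix (Fin 2) (Fin 2) ℂ) *ᵥ v = c • v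

local notation "M2" => Matrix (Fin 2) (Fin 2) ℂ

lemma tr2 (a b c d : ℂ) : (!![a,b;c,d])ᵀ = !![a,c;b,d] := by
  ext i j; fin_cases i <;> fin_cases j <;> simp

lemma ct2 (a b c d : ℂ) : (!![a,b;c,d])ᴴ = !![starRingEnd ℂ a, starRingEnd ℂ c;
    starRingEnd ℂ b, starRingEnd ℂ d] := by
  ext i j; fin_cases i <;> fin_cases j <;> simp

lemma eq2 {a b c d a' b' c' d' : ℂ} (h1 : a = a') (h2 : b = b') (h3 : c = c') (h4 : d = d') :
    !![a,b;c,d] = !![a',b';c',d'] := by rw [h1, h2, h3, h4]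

lemma pres_conj (A K N N' : M2) (hNN : N * N' = 1) (h : Aᴴ * K * A = K) :
    (N' * A * N)ᴴ * (Nᴴ * K * N) * (N' * A * N) = Nᴴ * K * N := by
  have h2 : N'ᴴ * Nᴴ = 1 := by rw [← Matrix.conjTranspose_mul, hNN, Matrix.conjTranspose_one]
  calc (N' * A * N)ᴴ * (Nᴴ * K * N) * (N' * A * N)
      = Nᴴ * (Aᴴ * ((N'ᴴ * Nᴴ) * K * (N * N')) * A) * N := by
        simp only [Matrix.conjTranspose_mul, Matrix.mul_assoc]
    _ = Nᴴ * (Aᴴ * K * A) * N := by rw [h2, hNN, Matrix.one_mul, Matrix.mul_one, Matrix.mul_assoc]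
    _ = Nᴴ * K * N := by rw [h, Matrix.mul_assoc]

lemma pres_entries (a b d p h k : ℂ)
    (hpres : (!![a,b;0,d])ᴴ * !![p, h; starRingEnd ℂ h, k] * !![a,b;0,d]
      = !![p, h; starRingEnd ℂ h, k]) :
    starRingEnd ℂ a * p * a = p ∧
    starRingEnd ℂ a * p * b + starRingEnd ℂ a * h * d = h ∧
    starRingEnd ℂ b * p * b + starRingEnd ℂ b * h * d + starRingEnd ℂ d * starRingEnd ℂ h * b
      + starRingEnd ℂ d * k * d = k := by
  have e00 := congrFun (congrFun hpres 0) 0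
  have e01 := congrFun (congrFun hpres 0) 1
  have e11 := congrFun (congrFun hpres 1) 1
  simp [Matrix.mul_apply, Matrix.conjTranspose_apply, Fin.sum_univ_two] at e00 e01 e11
  exact ⟨by linear_combination e00, by linear_combination e01, by linear_combination e11⟩

section CaseB
variable (G : Subgroup (Matrix.SpecialLinearGroup (Fin 2) ℂ))
  (A : Matrix.SpecialLinearGroup (Fin 2) ℂ → M2) (K : M2) (h k : ℂ)

/-- case B step : shear by `β` keeps diagonal, transforms the form, and gives the scalar laws -/
lemma stepB (hh : h ≠ 0)
    (hKe : K = !![0, h; starRingEnd ℂ h, k])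
    (hlow : ∀ g ∈ G, A g 1 0 = 0)
    (hdet : ∀ g ∈ G, (A g).det = 1)
    (hpres : ∀ g ∈ G, (A g)ᴴ * K * (A g) = K)
    (β : ℂ) : ∀ g ∈ G, ∃ a b2 d : ℂ,
      !![1,-β;0,1] * A g * !![1,β;0,1] = !![a, b2; 0, d] ∧
      a = A g 0 0 ∧ d = A g 1 1 ∧ b2 = A g 0 1 + β * (A g 0 0 - A g 1 1) ∧
      a * d = 1 ∧ starRingEnd ℂ a = a ∧ starRingEnd ℂ d = d ∧
      (d * (starRingEnd ℂ b2 * h + b2 * starRingEnd ℂ h)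
          + d^2 * (starRingEnd ℂ h * β + starRingEnd ℂ β * h + k)
        = starRingEnd ℂ h * β + starRingEnd ℂ β * h + k) := by
  intro g hg
  have hAg : A g = !![A g 0 0, A g 0 1; 0, A g 1 1] := by
    have h0 := hlow g hg
    conv_lhs => rw [Matrix.eta_fin_two (A g)]
    rw [h0]
  set a := A g 0 0; set b := A g 0 1; set d := A g 1 1
  set b2 := b + β * (a - d) with hb2
  have hmat : !![1,-β;0,1] * A g * !![1,β;0,1] = !![a, b2; 0, d] := by
    rw [hAg, Matrix.mul_fin_two, Matrix.mul_fin_two]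
    exact eq2 (by ring) (by ring) (by ring) (by ring)
  have had : a * d = 1 := by
    have := hdet g hg
    rw [hAg, Matrix.det_fin_two_of] at this
    linear_combination this
  have hd0 : d ≠ 0 := by
    intro h0; rw [h0, mul_zero] at had; exact one_ne_zero had.symm
  have ha0 : a ≠ 0 := by
    intro h0; rw [h0, zero_mul] at had; exact one_ne_zero had.symm
  set k2 := starRingEnd ℂ h * β + starRingEnd ℂ β * h + k with hk2
  have hK2 : (!![1,β;0,1])ᴴ * K * !![1,β;0,1] = !![0, h; starRingEnd ℂ h, k2] := by
    rw [hKe, ct2, Matrix.mul_fin_two, Matrix.mul_fin_two]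
    exact eq2 (by simp; try ring) (by simp; try ring) (by simp; try ring) (by simp; try ring)
  have hNN : (!![1,β;0,1] : M2) * !![1,-β;0,1] = 1 := by
    rw [Matrix.mul_fin_two, Matrix.one_fin_two]
    exact eq2 (by ring) (by ring) (by ring) (by ring)
  have presB := pres_conj (A g) K !![1,β;0,1] !![1,-β;0,1] hNN (hpres g hg)
  rw [hK2, hmat] at presB
  obtain ⟨e00, e01, e11⟩ := pres_entries a b2 d 0 h k2 presB
  have hcad : starRingEnd ℂ a * d = 1 := by
    have h2 : (starRingEnd ℂ a * d - 1) * h = 0 := by linear_combination e01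
    rcases mul_eq_zero.mp h2 with h3 | h3
    · linear_combination h3
    · exact absurd h3 hh
  have hca : starRingEnd ℂ a = a := by
    have := hcad.trans had.symm
    exact mul_right_cancel₀ hd0 this
  have hcd : starRingEnd ℂ d = d := by
    have h4 : a * starRingEnd ℂ d = 1 := by
      have := congrArg (starRingEnd ℂ) had
      simpa [hca] using this
    have := h4.trans had.symm
    exact mul_left_cancel₀ ha0 this
  refine ⟨a, b2, d, hmat, rfl, rfl, hb2, had, hca, hcd, ?_⟩
  linear_combination e11 - (starRingEnd ℂ h * b2 + d * k2) * hcd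
end CaseB

lemma caseB (G : Subgroup (Matrix.SpecialLinearGroup (Fin 2) ℂ))
    (A : Matrix.SpecialLinearGroup (Fin 2) ℂ → M2) (K : M2) (h k : ℂ)
    (hh : h ≠ 0) (hKe : K = !![0, h; starRingEnd ℂ h, k])
    (hlow : ∀ g ∈ G, A g 1 0 = 0)
    (hdet : ∀ g ∈ G, (A g).det = 1)
    (hpres : ∀ g ∈ G, (A g)ᴴ * K * (A g) = K) :
    ∃ S : M2, IsUnit S.det ∧ ∀ g ∈ G,
      (S⁻¹ * A g * S) 1 0 = 0 ∧ (∀ i j, ((S⁻¹ * A g * S) i j).im = 0) ∧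
      (S⁻¹ * A g * S).det = 1 := by
  have hch : (starRingEnd ℂ) h ≠ 0 := by
    intro h0; exact hh (by simpa using congrArg (starRingEnd ℂ) h0)
  -- find a shear β after which all upper-right entries b2 satisfy  b2̄ h + b2 h̄ = 0
  have key : ∃ β : ℂ, ∀ g ∈ G, ∃ a b2 d : ℂ,
      !![1,-β;0,1] * A g * !![1,β;0,1] = !![a, b2; 0, d] ∧
      a * d = 1 ∧ starRingEnd ℂ a = a ∧ starRingEnd ℂ d = d ∧
      starRingEnd ℂ b2 * h + b2 * starRingEnd ℂ h = 0 := by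
    by_cases hall : ∀ g ∈ G, A g 0 0 * A g 0 0 = 1
    · refine ⟨0, fun g hg => ?_⟩
      obtain ⟨a, b2, d, hmat, ha, hd, hb2, had, hca, hcd, law⟩ :=
        stepB G A K h k hh hKe hlow hdet hpres 0 g hg
      have hd0 : d ≠ 0 := by
        intro h0; rw [h0, mul_zero] at had; exact one_ne_zero had.symm
      have ha0 : a ≠ 0 := by
        intro h0; rw [h0, zero_mul] at had; exact one_ne_zero had.symm
      have haa : a * a = 1 := by rw [ha]; exact hall g hg
      have hda : d = a := mul_left_cancel₀ ha0 (had.trans haa.symm)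
      have hX : d * (starRingEnd ℂ b2 * h + b2 * starRingEnd ℂ h) = 0 := by
        have hdd : d * d = 1 := by rw [hda]; exact haa
        linear_combination law - (starRingEnd ℂ h * 0 + starRingEnd ℂ 0 * h + k) * hdd
      refine ⟨a, b2, d, hmat, had, hca, hcd, ?_⟩
      rcases mul_eq_zero.mp hX with h0 | h0
      · exact absurd h0 hd0
      · exact h0
    · push_neg at hall
      obtain ⟨g₀, hg₀, hsq⟩ := hall
      obtain ⟨a₀, b₀, d₀, hmat₀, ha₀, hd₀, hb₀, had₀, hca₀, hcd₀, law₀'⟩ :=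
        stepB G A K h k hh hKe hlow hdet hpres 0 g₀ hg₀
      have hd00 : d₀ ≠ 0 := by
        intro h0; rw [h0, mul_zero] at had₀; exact one_ne_zero had₀.symm
      have hsq' : a₀ * a₀ ≠ 1 := by rw [ha₀]; exact hsq
      have hda₀ : d₀ - a₀ ≠ 0 := by
        intro h0
        have : d₀ = a₀ := by linear_combination h0
        rw [this] at had₀
        exact hsq' (by linear_combination had₀)
      set β := (A g₀ 0 1) / (A g₀ 1 1 - A g₀ 0 0) with hβ
      set k2 := starRingEnd ℂ h * β + starRingEnd ℂ β * h + k with hk2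
      -- the transformed (1,1) form entry vanishes
      have hk20 : k2 = 0 := by
        obtain ⟨a₁, b₁, d₁, hmat₁, ha₁, hd₁, hb₁, had₁, hca₁, hcd₁, law₁⟩ :=
          stepB G A K h k hh hKe hlow hdet hpres β g₀ hg₀
        have hb10 : b₁ = 0 := by
          rw [hb₁, hβ]
          rw [ha₀, hd₀] at hda₀
          field_simp
          try ring
        have hd1 : d₁ = d₀ := by rw [hd₁, hd₀]
        have ha1 : a₁ = a₀ := by rw [ha₁, ha₀]
        have hdd1 : d₀ * d₀ ≠ 1 := by
          intro h0
          have : a₀ = d₀ := mul_right_cancel₀ hd00 (had₀.trans h0.symm)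
          rw [this] at hsq'
          exact hsq' h0
        have law2 : k2 * (d₀ * d₀ - 1) = 0 := by
          rw [hb10, hd1] at law₁
          simp only [map_zero, mul_zero, zero_mul, add_zero, zero_add] at law₁
          linear_combination law₁
        rcases mul_eq_zero.mp law2 with h0 | h0
        · exact h0
        · exact absurd (by linear_combination h0) hdd1
      refine ⟨β, fun g hg => ?_⟩
      obtain ⟨a, b2, d, hmat, ha, hd, hb2, had, hca, hcd, law⟩ :=
        stepB G A K h k hh hKe hlow hdet hpres β g hg
      have hd0 : d ≠ 0 := by
        intro h0; rw [h0, mul_zero] at had; exact one_ne_zero had.symm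
      have hX : d * (starRingEnd ℂ b2 * h + b2 * starRingEnd ℂ h) = 0 := by
        rw [← hk2] at law
        rw [hk20] at law
        linear_combination law
      refine ⟨a, b2, d, hmat, had, hca, hcd, ?_⟩
      rcases mul_eq_zero.mp hX with h0 | h0
      · exact absurd h0 hd0
      · exact h0
  obtain ⟨β, key⟩ := key
  -- a square root μ of -i h̄, used for the final rescaling
  obtain ⟨μ, hμ'⟩ := IsAlgClosed.exists_pow_nat_eq (-Complex.I * starRingEnd ℂ h) (n := 2)
    (by norm_num)
  have hμ : μ * μ = -Complex.I * starRingEnd ℂ h := by rw [← hμ']; ring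
  have hμ0 : μ ≠ 0 := by
    intro h0
    rw [h0, mul_zero] at hμ
    rcases mul_eq_zero.mp hμ.symm with h1 | h1
    · exact Complex.I_ne_zero (by linear_combination -h1)
    · exact hch h1
  have hμc : starRingEnd ℂ μ * starRingEnd ℂ μ = Complex.I * h := by
    have := congrArg (starRingEnd ℂ) hμ
    simpa [Complex.conj_I] using this
  refine ⟨!![1,β;0,1] * !![μ⁻¹,0;0,μ], ?_, ?_⟩
  case _ =>
    rw [Matrix.det_mul]
    apply IsUnit.mul <;> rw [Matrix.det_fin_two_of] <;> simp [isUnit_iff_ne_zero, hμ0]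
  have hDD : (!![μ⁻¹,0;0,μ] : M2) * !![μ,0;0,μ⁻¹] = 1 := by
    rw [Matrix.mul_fin_two, Matrix.one_fin_two]
    exact eq2 (by field_simp; ring) (by ring) (by ring) (by field_simp; ring)
  have hNN : (!![1,β;0,1] : M2) * !![1,-β;0,1] = 1 := by
    rw [Matrix.mul_fin_two, Matrix.one_fin_two]
    exact eq2 (by ring) (by ring) (by ring) (by ring)
  have hSS : (!![1,β;0,1] * !![μ⁻¹,0;0,μ] : M2) * (!![μ,0;0,μ⁻¹] * !![1,-β;0,1]) = 1 := by
    have e : (!![1,β;0,1] * !![μ⁻¹,0;0,μ] : M2) * (!![μ,0;0,μ⁻¹] * !![1,-β;0,1])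
        = !![1,β;0,1] * ((!![μ⁻¹,0;0,μ] * !![μ,0;0,μ⁻¹]) * !![1,-β;0,1]) := by
      simp only [Matrix.mul_assoc]
    rw [e, hDD, Matrix.one_mul, hNN]
  have hSinv : (!![1,β;0,1] * !![μ⁻¹,0;0,μ] : M2)⁻¹ = !![μ,0;0,μ⁻¹] * !![1,-β;0,1] :=
    Matrix.inv_eq_right_inv hSS
  intro g hg
  obtain ⟨a, b2, d, hmat, had, hca, hcd, hX⟩ := key g hg
  have hM : (!![μ,0;0,μ⁻¹] * !![1,-β;0,1]) * A g * (!![1,β;0,1] * !![μ⁻¹,0;0,μ])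
      = !![a, μ * (b2 * μ); 0, d] := by
    have e : (!![μ,0;0,μ⁻¹] * !![1,-β;0,1]) * A g * (!![1,β;0,1] * !![μ⁻¹,0;0,μ])
        = !![μ,0;0,μ⁻¹] * ((!![1,-β;0,1] * A g * !![1,β;0,1]) * !![μ⁻¹,0;0,μ]) := by
      simp only [Matrix.mul_assoc]
    rw [e, hmat, Matrix.mul_fin_two, Matrix.mul_fin_two]
    refine eq2 ?_ (by ring) (by ring) ?_ <;> field_simp <;> ring
  rw [hSinv, hM]
  have hx : starRingEnd ℂ (μ * (b2 * μ)) = μ * (b2 * μ) := by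
    rw [_root_.map_mul, _root_.map_mul]
    linear_combination (starRingEnd ℂ b2) * hμc - b2 * hμ + Complex.I * hX
  refine ⟨by simp, ?_, ?_⟩
  · intro i j
    fin_cases i <;> fin_cases j <;> simp
    · exact Complex.conj_eq_iff_im.mp hca
    · exact Complex.conj_eq_iff_im.mp hx
    · exact Complex.conj_eq_iff_im.mp hcd
  · rw [Matrix.det_fin_two_of]
    linear_combination had
lemma caseA (G : Subgroup (Matrix.SpecialLinearGroup (Fin 2) ℂ))
    (A : Matrix.SpecialLinearGroup (Fin 2) ℂ → M2) (K : M2) (p h k : ℂ)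
    (hp : p ≠ 0) (hpbar : starRingEnd ℂ p = p)
    (hKe : K = !![p, h; starRingEnd ℂ h, k]) (hdK : K.det ≠ 0)
    (hlow : ∀ g ∈ G, A g 1 0 = 0)
    (hdet : ∀ g ∈ G, (A g).det = 1)
    (hpres : ∀ g ∈ G, (A g)ᴴ * K * (A g) = K) :
    ∃ S : M2, IsUnit S.det ∧ ∀ g ∈ G,
      (∀ i j, ((S⁻¹ * A g * S) i j).im = 0) ∧
      (S⁻¹ * A g * S)ᵀ * (S⁻¹ * A g * S) = 1 ∧
      (S⁻¹ * A g * S).det = 1 := by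
  set γ : ℂ := -(h/p) with hγdef
  have hγc : starRingEnd ℂ γ = -(starRingEnd ℂ h / p) := by
    rw [hγdef, map_neg, map_div₀, hpbar]
  set k2 : ℂ := k - starRingEnd ℂ h * h / p with hk2def
  have hNN : (!![1,γ;0,1] : M2) * !![1,-γ;0,1] = 1 := by
    rw [Matrix.mul_fin_two, Matrix.one_fin_two]
    exact eq2 (by ring) (by ring) (by ring) (by ring)
  have hK2 : (!![1,γ;0,1])ᴴ * K * !![1,γ;0,1] = !![p, 0; 0, k2] := by
    rw [hKe, ct2, Matrix.mul_fin_two, Matrix.mul_fin_two]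
    refine eq2 ?_ ?_ ?_ ?_ <;> simp only [_root_.map_one, _root_.map_zero, hγc, hγdef] <;>
      field_simp <;> ring_nf <;> (try simp [mul_inv_cancel_right₀ hp]) <;> try ring
    · rw [hpbar, mul_comm p, mul_inv_cancel_right₀ hp]; ring
    · rw [hk2def, mul_sub, mul_div_assoc', mul_div_cancel_left₀ _ hp]; ring
  have hdN : (!![1,γ;0,1] : M2).det = 1 := by rw [Matrix.det_fin_two_of]; ring
  have hpk2 : p * k2 ≠ 0 := by
    have hdet2 : ((!![1,γ;0,1])ᴴ * K * !![1,γ;0,1]).det = K.det := by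
      rw [Matrix.det_mul, Matrix.det_mul, Matrix.det_conjTranspose, hdN]
      simp
    rw [hK2, Matrix.det_fin_two_of] at hdet2
    intro h0
    rw [show p * k2 - 0 * 0 = p * k2 by ring, h0] at hdet2
    exact hdK hdet2.symm
  have hk20 : k2 ≠ 0 := fun h0 => hpk2 (by rw [h0, mul_zero])
  -- the per-element analysis : each matrix becomes diagonal with unit diagonal
  have key : ∀ g ∈ G, ∃ a : ℂ,
      !![1,-γ;0,1] * A g * !![1,γ;0,1] = !![a, 0; 0, starRingEnd ℂ a] ∧
      starRingEnd ℂ a * a = 1 := by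
    intro g hg
    have hAg : A g = !![A g 0 0, A g 0 1; 0, A g 1 1] := by
      have h0 := hlow g hg
      conv_lhs => rw [Matrix.eta_fin_two (A g)]
      rw [h0]
    set a := A g 0 0; set b := A g 0 1; set d := A g 1 1
    set b2 := b + γ * (a - d) with hb2def
    have hmat : !![1,-γ;0,1] * A g * !![1,γ;0,1] = !![a, b2; 0, d] := by
      rw [hAg, Matrix.mul_fin_two, Matrix.mul_fin_two]
      exact eq2 (by ring) (by ring) (by ring) (by ring)
    have had : a * d = 1 := by
      have := hdet g hg
      rw [hAg, Matrix.det_fin_two_of] at this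
      linear_combination this
    have ha0 : a ≠ 0 := by
      intro h0; rw [h0, zero_mul] at had; exact one_ne_zero had.symm
    have presB := pres_conj (A g) K !![1,γ;0,1] !![1,-γ;0,1] hNN (hpres g hg)
    rw [hK2, hmat] at presB
    obtain ⟨e00, e01, e11⟩ := pres_entries a b2 d p 0 k2 (by simpa only [map_zero] using presB)
    have haa : starRingEnd ℂ a * a = 1 := by
      have h2 : (starRingEnd ℂ a * a - 1) * p = 0 := by linear_combination e00
      rcases mul_eq_zero.mp h2 with h3 | h3
      · linear_combination h3
      · exact absurd h3 hp
    have hca0 : starRingEnd ℂ a ≠ 0 := by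
      intro h0; rw [h0, zero_mul] at haa; exact one_ne_zero haa.symm
    have hb20 : b2 = 0 := by
      have h2 : starRingEnd ℂ a * p * b2 = 0 := by linear_combination e01
      rcases mul_eq_zero.mp h2 with h3 | h3
      · rcases mul_eq_zero.mp h3 with h4 | h4
        · exact absurd h4 hca0
        · exact absurd h4 hp
      · exact h3
    have hd : d = starRingEnd ℂ a := by
      have h4 : a * starRingEnd ℂ a = 1 := by linear_combination haa
      exact mul_left_cancel₀ ha0 (had.trans h4.symm)
    rw [hb20, hd] at hmat
    exact ⟨a, hmat, haa⟩
  -- final conjugation sending unit diagonal matrices to rotations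
  refine ⟨!![1,γ;0,1] * !![(1:ℂ)/2, Complex.I/2; 1/2, -Complex.I/2], ?_, ?_⟩
  case _ =>
    rw [Matrix.det_mul, hdN]
    rw [Matrix.det_fin_two_of]
    have : (1:ℂ)/2 * (-Complex.I/2) - Complex.I/2 * (1/2) = -Complex.I/2 := by ring
    rw [this]
    simp [isUnit_iff_ne_zero, Complex.I_ne_zero]
  have hRR : (!![(1:ℂ)/2, Complex.I/2; 1/2, -Complex.I/2] : M2) * !![(1:ℂ),1;-Complex.I,Complex.I] = 1 := by
    rw [Matrix.mul_fin_two, Matrix.one_fin_two]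
    refine eq2 ?_ ?_ ?_ ?_ <;>
      first
        | linear_combination (-(1:ℂ)/2) * Complex.I_sq
        | linear_combination ((1:ℂ)/2) * Complex.I_sq
  have hSS : ((!![1,γ;0,1] : M2) * !![(1:ℂ)/2, Complex.I/2; 1/2, -Complex.I/2]) *
      (!![(1:ℂ),1;-Complex.I,Complex.I] * !![1,-γ;0,1]) = 1 := by
    have e : ((!![1,γ;0,1] : M2) * !![(1:ℂ)/2, Complex.I/2; 1/2, -Complex.I/2]) *
        (!![(1:ℂ),1;-Complex.I,Complex.I] * !![1,-γ;0,1])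
        = !![1,γ;0,1] * ((!![(1:ℂ)/2, Complex.I/2; 1/2, -Complex.I/2] *
            !![(1:ℂ),1;-Complex.I,Complex.I]) * !![1,-γ;0,1]) := by
      simp only [Matrix.mul_assoc]
    rw [e, hRR, Matrix.one_mul, hNN]
  have hSinv : ((!![1,γ;0,1] : M2) * !![(1:ℂ)/2, Complex.I/2; 1/2, -Complex.I/2])⁻¹
      = !![(1:ℂ),1;-Complex.I,Complex.I] * !![1,-γ;0,1] := Matrix.inv_eq_right_inv hSS
  intro g hg
  obtain ⟨a, hmat, haa⟩ := key g hg
  set c := a.re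
  set s := a.im
  have ha_decomp : a = (c:ℂ) + (s:ℂ) * Complex.I := (Complex.re_add_im a).symm
  have hconj : starRingEnd ℂ a = (c:ℂ) - (s:ℂ) * Complex.I := by
    apply Complex.ext <;> simp [c, s]
  have hcs : (c:ℂ) * c + (s:ℂ) * s = 1 := by
    linear_combination haa - a * hconj - ((c:ℂ) - (s:ℂ)*Complex.I) * ha_decomp
      + (s:ℂ)^2 * Complex.I_sq
  have hM : (!![(1:ℂ),1;-Complex.I,Complex.I] * !![1,-γ;0,1]) * A g *
      ((!![1,γ;0,1] : M2) * !![(1:ℂ)/2, Complex.I/2; 1/2, -Complex.I/2])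
      = !![(c:ℂ), -(s:ℂ); (s:ℂ), (c:ℂ)] := by
    have e : (!![(1:ℂ),1;-Complex.I,Complex.I] * !![1,-γ;0,1]) * A g *
        ((!![1,γ;0,1] : M2) * !![(1:ℂ)/2, Complex.I/2; 1/2, -Complex.I/2])
        = !![(1:ℂ),1;-Complex.I,Complex.I] * ((!![1,-γ;0,1] * A g * !![1,γ;0,1]) *
            !![(1:ℂ)/2, Complex.I/2; 1/2, -Complex.I/2]) := by
      simp only [Matrix.mul_assoc]
    rw [e, hmat, Matrix.mul_fin_two, Matrix.mul_fin_two]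
    refine eq2 ?_ ?_ ?_ ?_
    · linear_combination ((1:ℂ)/2) * ha_decomp + ((1:ℂ)/2) * hconj
    · linear_combination (Complex.I/2) * ha_decomp - (Complex.I/2) * hconj + (s:ℂ) * Complex.I_sq
    · linear_combination (-Complex.I/2) * ha_decomp + (Complex.I/2) * hconj - (s:ℂ) * Complex.I_sq
    · linear_combination (-Complex.I^2/2) * ha_decomp - (Complex.I^2/2) * hconj
        - (c:ℂ) * Complex.I_sq
  rw [hSinv, hM]
  refine ⟨?_, ?_, ?_⟩
  · intro i j
    fin_cases i <;> fin_cases j <;> simp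
  · rw [tr2, Matrix.mul_fin_two, Matrix.one_fin_two]
    exact eq2 (by linear_combination hcs) (by ring) (by ring) (by linear_combination hcs)
  · rw [Matrix.det_fin_two_of]
    linear_combination hcs

lemma conjT_eq_transpose_of_real (M : M2) (h : ∀ i j, (M i j).im = 0) : Mᴴ = Mᵀ := by
  ext i j
  simp only [Matrix.conjTranspose_apply, Matrix.transpose_apply, Complex.star_def]
  exact Complex.conj_eq_iff_im.mpr (h j i)

lemma model_b_pres (M : M2) (h : ∀ i j, (M i j).im = 0) (hdet : M.det = 1) :
    Mᴴ * !![0, Complex.I; -Complex.I, 0] * M = !![0, Complex.I; -Complex.I, 0] := by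
  rw [conjT_eq_transpose_of_real M h]
  rw [Matrix.det_fin_two] at hdet
  rw [Matrix.eta_fin_two M, tr2, Matrix.mul_fin_two, Matrix.mul_fin_two]
  exact eq2 (by ring) (by linear_combination Complex.I * hdet)
    (by linear_combination (-Complex.I) * hdet) (by ring)

lemma unitary_of_conj_pres (G : Subgroup (Matrix.SpecialLinearGroup (Fin 2) ℂ))
    (T H0 : M2) (hT : IsUnit T.det) (hH0 : H0.IsHermitian) (hd0 : H0.det ≠ 0)
    (hpres : ∀ g ∈ G, (T⁻¹ * (g : M2) * T)ᴴ * H0 * (T⁻¹ * (g : M2) * T) = H0) :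
    IsUnitarySubgroup G := by
  have hTT : T * T⁻¹ = 1 := Matrix.mul_nonsing_inv T hT
  have hTinvdet : IsUnit (T⁻¹).det := (Matrix.isUnit_nonsing_inv_det T hT)
  refine ⟨T⁻¹ᴴ * H0 * T⁻¹, ?_, ?_, ?_⟩
  · rw [Matrix.IsHermitian]
    simp only [Matrix.conjTranspose_mul, Matrix.conjTranspose_conjTranspose, hH0.eq,
      Matrix.mul_assoc]
  · rw [Matrix.det_mul, Matrix.det_mul, Matrix.det_conjTranspose]
    refine mul_ne_zero (mul_ne_zero ?_ hd0) ?_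
    · simpa using hTinvdet.ne_zero
    · exact hTinvdet.ne_zero
  · intro g hg
    have e1 : T⁻¹ * (g : M2) = (T⁻¹ * (g : M2) * T) * T⁻¹ := by
      rw [Matrix.mul_assoc, hTT, Matrix.mul_one]
    calc (g : M2)ᴴ * (T⁻¹ᴴ * H0 * T⁻¹) * (g : M2)
        = (T⁻¹ * (g : M2))ᴴ * H0 * (T⁻¹ * (g : M2)) := by
          simp only [Matrix.conjTranspose_mul, Matrix.mul_assoc]
      _ = ((T⁻¹ * (g : M2) * T) * T⁻¹)ᴴ * H0 * ((T⁻¹ * (g : M2) * T) * T⁻¹) := by rw [← e1]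
      _ = T⁻¹ᴴ * ((T⁻¹ * (g : M2) * T)ᴴ * H0 * (T⁻¹ * (g : M2) * T)) * T⁻¹ := by
          simp only [Matrix.conjTranspose_mul, Matrix.mul_assoc]
      _ = T⁻¹ᴴ * H0 * T⁻¹ := by rw [hpres g hg, Matrix.mul_assoc]


lemma core (G : Subgroup (Matrix.SpecialLinearGroup (Fin 2) ℂ))
    (A : Matrix.SpecialLinearGroup (Fin 2) ℂ → M2) (K : M2)
    (hK : K.IsHermitian) (hdK : K.det ≠ 0)
    (hlow : ∀ g ∈ G, A g 1 0 = 0)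
    (hdet : ∀ g ∈ G, (A g).det = 1)
    (hpres : ∀ g ∈ G, (A g)ᴴ * K * (A g) = K) :
    ∃ S : M2, IsUnit S.det ∧
      ((∀ g ∈ G, (∀ i j, ((S⁻¹ * A g * S) i j).im = 0) ∧
          (S⁻¹ * A g * S)ᵀ * (S⁻¹ * A g * S) = 1 ∧ (S⁻¹ * A g * S).det = 1) ∨
       (∀ g ∈ G, (S⁻¹ * A g * S) 1 0 = 0 ∧ (∀ i j, ((S⁻¹ * A g * S) i j).im = 0) ∧
          (S⁻¹ * A g * S).det = 1)) := by
  have hK10 : K 1 0 = starRingEnd ℂ (K 0 1) := by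
    have e := congrFun (congrFun hK.symm 1) 0
    simpa [Matrix.conjTranspose_apply] using e
  have hpbar : starRingEnd ℂ (K 0 0) = K 0 0 := by
    have e := congrFun (congrFun hK 0) 0
    simpa [Matrix.conjTranspose_apply] using e
  have hKe : K = !![K 0 0, K 0 1; starRingEnd ℂ (K 0 1), K 1 1] := by
    conv_lhs => rw [Matrix.eta_fin_two K]
    rw [hK10]
  by_cases hp0 : K 0 0 = 0
  · rw [hp0] at hKe
    have hh : K 0 1 ≠ 0 := by
      intro h0
      apply hdK
      rw [hKe, Matrix.det_fin_two_of, h0]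
      ring
    obtain ⟨S, hSunit, hS⟩ := caseB G A K (K 0 1) (K 1 1) hh hKe hlow hdet hpres
    exact ⟨S, hSunit, Or.inr hS⟩
  · obtain ⟨S, hSunit, hS⟩ := caseA G A K (K 0 0) (K 0 1) (K 1 1) hp0 hpbar hKe hdK
      hlow hdet hpres
    exact ⟨S, hSunit, Or.inl hS⟩

/-- A reducible subgroup of `SL(2,ℂ)` is unitary iff it is conjugate to a subgroup of
`SO(2,ℝ)` or to a subgroup of the real upper-triangular matrices of determinant 1. -/
theorem reducible_unitary_iff_conj_model
    (G : Subgroup (Matrix.SpecialLinearGroup (Fin 2) ℂ))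
    (hred : IsReducibleSubgroup G) :
    IsUnitarySubgroup G ↔
      ∃ T : Matrix (Fin 2) (Fin 2) ℂ, IsUnit T.det ∧
        ((∀ g ∈ G,
            (∀ i j, ((T⁻¹ * (g : Matrix (Fin 2) (Fin 2) ℂ) * T) i j).im = 0) ∧
            (T⁻¹ * (g : Matrix (Fin 2) (Fin 2) ℂ) * T)ᵀ *
              (T⁻¹ * (g : Matrix (Fin 2) (Fin 2) ℂ) * T) = 1 ∧
            (T⁻¹ * (g : Matrix (Fin 2) (Fin 2) ℂ) * T).det = 1) ∨
         (∀ g ∈ G,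
            (T⁻¹ * (g : Matrix (Fin 2) (Fin 2) ℂ) * T) 1 0 = 0 ∧
            (∀ i j, ((T⁻¹ * (g : Matrix (Fin 2) (Fin 2) ℂ) * T) i j).im = 0) ∧
            (T⁻¹ * (g : Matrix (Fin 2) (Fin 2) ℂ) * T).det = 1)) := by
  constructor
  · rintro ⟨H, hH, hdH, hpresH⟩
    obtain ⟨v, hv, hvec⟩ := hred
    set P : M2 := !![v 0, -starRingEnd ℂ (v 1); v 1, starRingEnd ℂ (v 0)] with hPdef
    have hdP : P.det = v 0 * starRingEnd ℂ (v 0) + v 1 * starRingEnd ℂ (v 1) := by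
      rw [hPdef, Matrix.det_fin_two_of]; ring
    have hPdet : P.det ≠ 0 := by
      intro h0
      rw [hdP, Complex.mul_conj, Complex.mul_conj] at h0
      norm_cast at h0
      have h1 : Complex.normSq (v 0) = 0 := by
        nlinarith [Complex.normSq_nonneg (v 0), Complex.normSq_nonneg (v 1)]
      have h2 : Complex.normSq (v 1) = 0 := by
        nlinarith [Complex.normSq_nonneg (v 0), Complex.normSq_nonneg (v 1)]
      apply hv
      funext i
      fin_cases i
      · exact Complex.normSq_eq_zero.mp h1
      · exact Complex.normSq_eq_zero.mp h2
    have hPunit : IsUnit P.det := isUnit_iff_ne_zero.mpr hPdet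
    have hPP : P * P⁻¹ = 1 := Matrix.mul_nonsing_inv _ hPunit
    have hP'P : P⁻¹ * P = 1 := Matrix.nonsing_inv_mul _ hPunit
    set A : Matrix.SpecialLinearGroup (Fin 2) ℂ → M2 :=
      fun g => P⁻¹ * (g : M2) * P with hAdef
    have hlow : ∀ g ∈ G, A g 1 0 = 0 := by
      intro g hg
      obtain ⟨c, hc⟩ := hvec g hg
      show (P⁻¹ * (g : M2) * P) 1 0 = 0
      set X : M2 := P⁻¹ * (g : M2) * P with hXdef
      have hPA : P * X = (g : M2) * P := by
        calc P * (P⁻¹ * (g : M2) * P) = (P * P⁻¹) * ((g : M2) * P) := by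
              simp only [Matrix.mul_assoc]
          _ = (g : M2) * P := by rw [hPP, Matrix.one_mul]
      clear_value X
      have e0 := congrFun (congrFun hPA 0) 0
      have e1 := congrFun (congrFun hPA 1) 0
      have hc0 := congrFun hc 0
      have hc1 := congrFun hc 1
      simp only [Matrix.mul_apply, Fin.sum_univ_two, hPdef, Matrix.cons_val', Matrix.cons_val_zero,
        Matrix.cons_val_one, Matrix.head_cons, Matrix.head_fin_const, Matrix.empty_val',
        Matrix.cons_val_fin_one, Matrix.of_apply] at e0 e1
      simp only [Matrix.mulVec, dotProduct, Fin.sum_univ_two, Pi.smul_apply,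
        smul_eq_mul] at hc0 hc1
      have hkey : (v 0 * starRingEnd ℂ (v 0) + v 1 * starRingEnd ℂ (v 1)) * (X 1 0) = 0 := by
        linear_combination v 0 * e1 - v 1 * e0 + v 0 * hc1 - v 1 * hc0
      rcases mul_eq_zero.mp hkey with h0 | h0
      · exact absurd (hdP.trans h0) hPdet
      · exact h0
    have hdetA : ∀ g ∈ G, (A g).det = 1 := by
      intro g hg
      rw [hAdef]
      simp only
      rw [Matrix.det_mul, Matrix.det_mul, Matrix.SpecialLinearGroup.det_coe, mul_one]
      have := congrArg Matrix.det hP'P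
      rw [Matrix.det_mul, Matrix.det_one] at this
      exact this
    have hKherm : (Pᴴ * H * P).IsHermitian := by
      rw [Matrix.IsHermitian]
      simp only [Matrix.conjTranspose_mul, Matrix.conjTranspose_conjTranspose, hH.eq,
        Matrix.mul_assoc]
    have hKdet : (Pᴴ * H * P).det ≠ 0 := by
      rw [Matrix.det_mul, Matrix.det_mul, Matrix.det_conjTranspose]
      exact mul_ne_zero (mul_ne_zero (star_ne_zero.mpr hPdet) hdH) hPdet
    have hpresA : ∀ g ∈ G, (A g)ᴴ * (Pᴴ * H * P) * (A g) = Pᴴ * H * P := by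
      intro g hg
      exact pres_conj (g : M2) H P P⁻¹ hPP (hpresH g hg)
    obtain ⟨S, hSunit, hbranch⟩ := core G A (Pᴴ * H * P) hKherm hKdet hlow hdetA hpresA
    refine ⟨P * S, ?_, ?_⟩
    · rw [Matrix.det_mul]; exact hPunit.mul hSunit
    have htr : ∀ g : Matrix.SpecialLinearGroup (Fin 2) ℂ,
        (P * S)⁻¹ * (g : M2) * (P * S) = S⁻¹ * A g * S := by
      intro g
      rw [Matrix.mul_inv_rev, hAdef]
      simp only [Matrix.mul_assoc]
    rcases hbranch with hb | hb
    · left; intro g hg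
      rw [htr g]
      exact hb g hg
    · right; intro g hg
      rw [htr g]
      exact hb g hg
  · rintro ⟨T, hT, hcase⟩
    have hTT : T * T⁻¹ = 1 := Matrix.mul_nonsing_inv T hT
    rcases hcase with hc | hc
    · refine unitary_of_conj_pres G T 1 hT Matrix.isHermitian_one (by simp) ?_
      intro g hg
      obtain ⟨him, horth, _⟩ := hc g hg
      rw [Matrix.mul_one, conjT_eq_transpose_of_real _ him]
      exact horth
    · refine unitary_of_conj_pres G T !![0, Complex.I; -Complex.I, 0] hT ?_ ?_ ?_
      · rw [Matrix.IsHermitian, ct2]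
        exact eq2 (by simp) (by simp) (by simp) (by simp)
      · rw [Matrix.det_fin_two_of]
        intro h0
        have : (1 : ℂ) = 0 := by linear_combination -h0 + Complex.I_sq
        exact one_ne_zero this
      · intro g hg
        obtain ⟨_, him, hdet1⟩ := hc g hg
        exact model_b_pres _ him hdet1
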